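/- Let (X, 𝔅, μ, T) be a measure-preserving system with μ nonatomic, and let E ⊆ X be a set such that for every pair of distinct points x, y ∈ E, the set of times n for which (T^n x, T^n y) lies in a fixed measurable subset of X × X has upper density 1 while its complement in ℕ has positive upper density (so the visit times do not have a density). If every such pair of points is non-generic for the product system in this sense, then (μ × μ)(E × E) = 0 and hence any measurable such E satisfies μ(E) = 0. -/

import Mathlib

open MeasureTheory Filter
open scoped Classical

/-- Upper density of a set of natural numbers: `limsup_N #(S ∩ [1,N]) / N`. -/
noncomputable def upperDensity (S : Set ℕ) : ℝ :=
  Filter.limsup (fun N : ℕ => (((Finset.Icc 1 N).filter (fun n => n ∈ S)).card : ℝ) / N)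
    Filter.atTop

lemma upperDensity_eq_limsup (S : Set ℕ) : upperDensity S
    = Filter.limsup (fun N : ℕ => (((Finset.Icc 1 N).filter (fun n => n ∈ S)).card : ℝ) / N)
      Filter.atTop := rfl

lemma upperDensity_eq_zero {S : Set ℕ} (h : ∀ n, 1 ≤ n → n ∉ S) : upperDensity S = 0 := by
  have hfun : ∀ N : ℕ, (((Finset.Icc 1 N).filter (fun n => n ∈ S)).card : ℝ) / N = 0 := by
    intro N
    have h0 : ((Finset.Icc 1 N).filter (fun n => n ∈ S)).card = 0 := by
      rw [Finset.card_eq_zero, Finset.eq_empty_iff_forall_notMem]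
      intro n hn
      rw [Finset.mem_filter, Finset.mem_Icc] at hn
      exact h n hn.1.1 hn.2
    rw [h0]; simp
  unfold upperDensity
  rw [funext hfun, limsup_const]

section Auxiliary

variable {Y : Type*}

lemma measurable_birkhoffSum [MeasurableSpace Y] {S : Y → Y} {f : Y → ℝ}
    (hS : Measurable S) (hf : Measurable f) (N : ℕ) :
    Measurable (fun q => birkhoffSum S f N q) := by
  simp only [birkhoffSum]
  exact Finset.measurable_sum _ (fun i _ => hf.comp (hS.iterate i))

lemma abs_birkhoffSum_le {S : Y → Y} {f : Y → ℝ} {C : ℝ} (hC : ∀ q, |f q| ≤ C)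
    (N : ℕ) (q : Y) : |birkhoffSum S f N q| ≤ N * C := by
  calc |birkhoffSum S f N q| ≤ ∑ i ∈ Finset.range N, |f (S^[i] q)| :=
        Finset.abs_sum_le_sum_abs _ _
    _ ≤ ∑ _i ∈ Finset.range N, C := Finset.sum_le_sum (fun i _ => hC _)
    _ = N * C := by simp [mul_comm]

/-- running maximum `max (0, S_1 f, ..., S_N f)`. -/
noncomputable def maxS (S : Y → Y) (f : Y → ℝ) : ℕ → Y → ℝ
  | 0 => fun _ => 0
  | N + 1 => fun q => max (maxS S f N q) (birkhoffSum S f (N + 1) q)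

lemma maxS_nonneg (S : Y → Y) (f : Y → ℝ) (N : ℕ) (q : Y) : 0 ≤ maxS S f N q := by
  induction N with
  | zero => simp [maxS]
  | succ N ih => exact le_trans ih (le_max_left _ _)

lemma maxS_mono (S : Y → Y) (f : Y → ℝ) (N : ℕ) (q : Y) :
    maxS S f N q ≤ maxS S f (N + 1) q := le_max_left _ _

lemma le_maxS (S : Y → Y) (f : Y → ℝ) {k N : ℕ} (hk : k ≤ N) (q : Y) :
    birkhoffSum S f k q ≤ maxS S f N q := by
  induction N with
  | zero =>
    interval_cases k
    simp [maxS, birkhoffSum_zero]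
  | succ N ih =>
    rcases Nat.lt_or_ge k (N + 1) with h | h
    · exact le_trans (ih (Nat.lt_succ_iff.mp h)) (le_max_left _ _)
    · have : k = N + 1 := le_antisymm hk h
      subst this
      exact le_max_right _ _

lemma measurable_maxS [MeasurableSpace Y] {S : Y → Y} {f : Y → ℝ}
    (hS : Measurable S) (hf : Measurable f) (N : ℕ) : Measurable (maxS S f N) := by
  induction N with
  | zero => exact measurable_const
  | succ N ih => exact ih.max (measurable_birkhoffSum hS hf (N + 1))

lemma maxS_le {S : Y → Y} {f : Y → ℝ} {C : ℝ} (hC : ∀ q, |f q| ≤ C) (N : ℕ) (q : Y) :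
    maxS S f N q ≤ N * C := by
  induction N with
  | zero => simp [maxS]
  | succ N ih =>
    refine max_le (le_trans ih ?_) (le_trans (le_abs_self _) (abs_birkhoffSum_le hC _ _))
    have hC0 : 0 ≤ C := le_trans (abs_nonneg _) (hC q)
    have : (N : ℝ) ≤ (N : ℝ) + 1 := by linarith
    push_cast
    nlinarith

lemma maxS_pos_exists {S : Y → Y} {f : Y → ℝ} {N : ℕ} {q : Y}
    (h : 0 < maxS S f N q) :
    ∃ k, 1 ≤ k ∧ k ≤ N ∧ maxS S f N q ≤ birkhoffSum S f k q := by
  induction N with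
  | zero => simp [maxS] at h
  | succ N ih =>
    rcases le_total (birkhoffSum S f (N + 1) q) (maxS S f N q) with hle | hle
    · have hmax : maxS S f (N + 1) q = maxS S f N q := max_eq_left hle
      rw [hmax] at h ⊢
      obtain ⟨k, h1, h2, h3⟩ := ih h
      exact ⟨k, h1, le_trans h2 (Nat.le_succ _), h3⟩
    · refine ⟨N + 1, Nat.succ_le_succ (Nat.zero_le _), le_refl _, ?_⟩
      exact max_le hle (le_refl _)

lemma maxS_key {S : Y → Y} {f : Y → ℝ} {N : ℕ} {q : Y} (h : 0 < maxS S f N q) :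
    maxS S f N q ≤ f q + maxS S f N (S q) := by
  obtain ⟨k, h1, h2, h3⟩ := maxS_pos_exists h
  obtain ⟨m, rfl⟩ := Nat.exists_eq_add_of_le h1
  rw [add_comm] at h3 h2
  rw [birkhoffSum_succ'] at h3
  have hm : m ≤ N := by omega
  have := le_maxS S f hm (S q)
  linarith

section MeasureSection

variable [MeasurableSpace Y] {ν : Measure Y} [IsProbabilityMeasure ν] {S : Y → Y} {f : Y → ℝ}

lemma integrable_of_bdd {g : Y → ℝ} (hg : Measurable g) {C : ℝ} (hC : ∀ q, |g q| ≤ C) :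
    Integrable g ν :=
  (integrable_const C).mono' hg.aestronglyMeasurable (Filter.Eventually.of_forall fun q => by
    simpa [Real.norm_eq_abs] using hC q)

lemma integral_comp_of_mp (hS : MeasurePreserving S ν ν) {g : Y → ℝ} (hg : Measurable g) :
    ∫ q, g (S q) ∂ν = ∫ q, g q ∂ν := by
  conv_rhs => rw [← hS.map_eq]
  rw [integral_map hS.measurable.aemeasurable]
  exact hg.aestronglyMeasurable.mono_ac (hS.map_eq.le.absolutelyContinuous)

theorem maximal_ergodic (hS : MeasurePreserving S ν ν) (hf : Measurable f) {C : ℝ}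
    (hC : ∀ q, |f q| ≤ C) :
    0 ≤ ∫ q in (⋃ N, {q | 0 < maxS S f N q}), f q ∂ν := by
  set U : ℕ → Set Y := fun N => {q | 0 < maxS S f N q} with hU
  have hUm : ∀ N, MeasurableSet (U N) :=
    fun N => measurableSet_lt measurable_const (measurable_maxS hS.measurable hf N)
  have hUmono : Monotone U :=
    monotone_nat_of_le_succ (fun N q hq => lt_of_lt_of_le hq (maxS_mono S f N q))
  have hfi : Integrable f ν := integrable_of_bdd hf hC
  have key : ∀ N, 0 ≤ ∫ q in U N, f q ∂ν := by
    intro N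
    set P : Y → ℝ := maxS S f N with hP
    have hPm : Measurable P := measurable_maxS hS.measurable hf N
    have hPb : ∀ q, |P q| ≤ N * C := fun q => by
      rw [abs_of_nonneg (maxS_nonneg S f N q)]; exact maxS_le hC N q
    have hPi : Integrable P ν := integrable_of_bdd hPm hPb
    have hPSi : Integrable (fun q => P (S q)) ν :=
      integrable_of_bdd (hPm.comp hS.measurable) (fun q => hPb (S q))
    have step1 : ∫ q in U N, (P q - P (S q)) ∂ν ≤ ∫ q in U N, f q ∂ν := by
      refine setIntegral_mono_on (hPi.sub hPSi).integrableOn hfi.integrableOn (hUm N) ?_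
      intro q hq
      have := maxS_key (hq : 0 < maxS S f N q)
      simp only [hP]
      linarith
    have step2 : ∫ q in (U N)ᶜ, (P q - P (S q)) ∂ν ≤ 0 := by
      refine setIntegral_nonpos (hUm N).compl ?_
      intro q hq
      have h1 : P q = 0 := le_antisymm (not_lt.mp hq) (maxS_nonneg S f N q)
      have h2 : 0 ≤ P (S q) := maxS_nonneg S f N (S q)
      simp only [h1]
      linarith
    have step3 : ∫ q, (P q - P (S q)) ∂ν = 0 := by
      rw [integral_sub hPi hPSi, integral_comp_of_mp hS hPm, sub_self]
    have whole := integral_add_compl (hUm N) (hPi.sub hPSi)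
    simp only [Pi.sub_apply] at whole
    linarith
  exact ge_of_tendsto' (tendsto_setIntegral_of_monotone hUm hUmono hfi.integrableOn) key

end MeasureSection

/-- points whose visit frequency to `W` has `limsup` equal to one -/
def goodB (S : Y → Y) (W : Set Y) : Set Y :=
  {q | ∀ k : ℕ, ∃ᶠ N in Filter.atTop,
    (1 - ((k : ℝ) + 1)⁻¹) * N < birkhoffSum S (W.indicator 1) N q}

lemma measurable_goodB [MeasurableSpace Y] {S : Y → Y} {W : Set Y}
    (hS : Measurable S) (hW : MeasurableSet W) : MeasurableSet (goodB S W) := by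
  have hh : Measurable (W.indicator (1 : Y → ℝ)) := measurable_one.indicator hW
  have : goodB S W = ⋂ k : ℕ, ⋂ M : ℕ, ⋃ N : ℕ, ⋃ (_ : M ≤ N),
      {q | (1 - ((k : ℝ) + 1)⁻¹) * N < birkhoffSum S (W.indicator 1) N q} := by
    ext q
    simp [goodB, Filter.frequently_atTop]
  rw [this]
  exact MeasurableSet.iInter fun k => MeasurableSet.iInter fun M =>
    MeasurableSet.iUnion fun N => MeasurableSet.iUnion fun _ =>
      measurableSet_lt measurable_const (measurable_birkhoffSum hS hh N)

lemma indicator_mem_Icc (W : Set Y) (q : Y) : W.indicator (1 : Y → ℝ) q ∈ Set.Icc 0 1 := by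
  by_cases h : q ∈ W <;> simp [Set.indicator_apply, h]

lemma goodB_invariant {S : Y → Y} {W : Set Y} {q : Y} (hq : q ∈ goodB S W) :
    S q ∈ goodB S W := by
  intro k
  have h2k := hq (2 * k + 1)
  rw [Filter.frequently_atTop] at h2k ⊢
  intro a
  obtain ⟨N, hN, hNlt⟩ := h2k (max (a + 1) 2)
  have hN2 : 2 ≤ N := le_trans (le_max_right _ _) hN
  obtain ⟨b, rfl⟩ : ∃ b, N = b + 1 := ⟨N - 1, by omega⟩
  refine ⟨b, by omega, ?_⟩
  have hsum : birkhoffSum S (W.indicator (1 : Y → ℝ)) (b + 1) q =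
      W.indicator (1 : Y → ℝ) q + birkhoffSum S (W.indicator (1 : Y → ℝ)) b (S q) :=
    birkhoffSum_succ' S (W.indicator (1 : Y → ℝ)) b q
  have hind := indicator_mem_Icc W q
  have hc : (0 : ℝ) < (k : ℝ) + 1 := by positivity
  have hb : (1 : ℝ) ≤ (b : ℝ) := by exact_mod_cast by omega
  have hcast : ((2 * k + 1 : ℕ) : ℝ) + 1 = 2 * ((k : ℝ) + 1) := by push_cast; ring
  rw [hcast] at hNlt
  push_cast at hNlt ⊢
  have hinv : ((k : ℝ) + 1)⁻¹ * ((k : ℝ) + 1) = 1 := inv_mul_cancel₀ (ne_of_gt hc)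
  have hinv2 : (2 * ((k : ℝ) + 1))⁻¹ * (2 * ((k : ℝ) + 1)) = 1 :=
    inv_mul_cancel₀ (by positivity)
  have hkey : (1 - ((k : ℝ) + 1)⁻¹) * (b : ℝ) ≤
      (1 - (2 * ((k : ℝ) + 1))⁻¹) * ((b : ℝ) + 1) - 1 := by
    have e1 : ((k : ℝ) + 1)⁻¹ = 2 * (2 * ((k : ℝ) + 1))⁻¹ := by
      rw [eq_comm, mul_comm]
      field_simp
    rw [e1]
    nlinarith [hinv2, hb]
  have : birkhoffSum S (W.indicator (1 : Y → ℝ)) b (S q) =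
      birkhoffSum S (W.indicator (1 : Y → ℝ)) (b + 1) q - W.indicator (1 : Y → ℝ) q := by
    rw [hsum]; ring
  rw [this]
  have h1 : W.indicator (1 : Y → ℝ) q ≤ 1 := (indicator_mem_Icc W q).2
  push_cast at hkey
  linarith

lemma goodB_iterate {S : Y → Y} {W : Set Y} {q : Y} (hq : q ∈ goodB S W) (n : ℕ) :
    S^[n] q ∈ goodB S W := by
  induction n with
  | zero => simpa using hq
  | succ n ih => rw [Function.iterate_succ_apply']; exact goodB_invariant ih

section MeasureSection2

variable [MeasurableSpace Y] {ν : Measure Y} [IsProbabilityMeasure ν] {S : Y → Y} {W : Set Y}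

lemma goodB_diff_null (hS : MeasurePreserving S ν ν) (hW : MeasurableSet W) :
    ν (goodB S W \ W) = 0 := by
  set B : Set Y := goodB S W with hBdef
  have hh : Measurable (W.indicator (1 : Y → ℝ)) := measurable_one.indicator hW
  have hB : MeasurableSet B := measurable_goodB hS.measurable hW
  have key : ∀ δ : ℝ, 0 < δ → δ ≤ 1 →
      (1 - δ) * (ν B).toReal ≤ (ν (B ∩ W)).toReal := by
    intro δ hδ hδ1
    obtain ⟨k, hk'⟩ := exists_nat_gt (1 / δ)
    have hkpos : (0 : ℝ) < (k : ℝ) + 1 := by positivity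
    have h1 : (1 : ℝ) < δ * ((k : ℝ) + 1) := by
      have h2 : δ * (1 / δ) = 1 := by field_simp
      nlinarith
    have hk : ((k : ℝ) + 1)⁻¹ < δ := by
      calc ((k : ℝ) + 1)⁻¹ = ((k : ℝ) + 1)⁻¹ * 1 := by ring
        _ < ((k : ℝ) + 1)⁻¹ * (δ * ((k : ℝ) + 1)) :=
            mul_lt_mul_of_pos_left h1 (by positivity)
        _ = δ := by field_simp
    set f : Y → ℝ := B.indicator (fun q => W.indicator (1 : Y → ℝ) q - (1 - δ)) with hfdef
    have hfm : Measurable f := (hh.sub measurable_const).indicator hB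
    have hfb : ∀ q, |f q| ≤ 2 := by
      intro q
      have hicc := indicator_mem_Icc W q
      rw [hfdef]
      by_cases hq : q ∈ B
      · rw [Set.indicator_of_mem hq, abs_le]
        exact ⟨by linarith [hicc.1], by linarith [hicc.2]⟩
      · rw [Set.indicator_of_notMem hq]
        norm_num
    have hsumf : ∀ q ∈ B, ∀ N : ℕ,
        birkhoffSum S f N q = birkhoffSum S (W.indicator (1 : Y → ℝ)) N q - (1 - δ) * N := by
      intro q hq N
      simp only [birkhoffSum]
      have : ∀ i ∈ Finset.range N, f (S^[i] q)
          = W.indicator (1 : Y → ℝ) (S^[i] q) - (1 - δ) := by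
        intro i _
        rw [hfdef]
        exact Set.indicator_of_mem (goodB_iterate hq i) _
      rw [Finset.sum_congr rfl this, Finset.sum_sub_distrib]
      simp [mul_comm]
      ring
    have hBU : B ⊆ ⋃ N, {q | 0 < maxS S f N q} := by
      intro q hq
      obtain ⟨N, hN⟩ := ((hq : q ∈ goodB S W) k).exists
      have h1 : (1 - δ) * (N : ℝ) ≤ (1 - ((k : ℝ) + 1)⁻¹) * N := by
        apply mul_le_mul_of_nonneg_right _ (Nat.cast_nonneg N)
        linarith
      have h2 : 0 < birkhoffSum S f N q := by
        rw [hsumf q hq N]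
        linarith
      exact Set.mem_iUnion.mpr ⟨N, lt_of_lt_of_le h2 (le_maxS S f (le_refl N) q)⟩
    have hmax := maximal_ergodic hS hfm hfb
    have hInt1 : ∫ q in (⋃ N, {q | 0 < maxS S f N q}), f q ∂ν
        = ∫ q in B, (W.indicator (1 : Y → ℝ) q - (1 - δ)) ∂ν := by
      rw [hfdef, setIntegral_indicator hB, Set.inter_eq_self_of_subset_right hBU]
    have hhi : IntegrableOn (W.indicator (1 : Y → ℝ)) B ν :=
      (integrable_of_bdd hh (fun q => by
        have hicc := indicator_mem_Icc W q
        rw [abs_le]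
        exact ⟨by linarith [hicc.1], hicc.2⟩)).integrableOn
    have hInt2 : ∫ q in B, (W.indicator (1 : Y → ℝ) q - (1 - δ)) ∂ν
        = (ν (B ∩ W)).toReal - (1 - δ) * (ν B).toReal := by
      rw [integral_sub hhi (integrable_const _).integrableOn]
      rw [setIntegral_indicator hW]
      simp only [Pi.one_apply]
      rw [setIntegral_const, setIntegral_const]
      simp [mul_comm]
      rfl
    rw [hInt1, hInt2] at hmax
    linarith
  have hfin1 : ν (B ∩ W) ≠ ⊤ := measure_ne_top ν _
  have hba : (ν (B ∩ W)).toReal ≤ (ν B).toReal :=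
    ENNReal.toReal_mono (measure_ne_top ν _) (measure_mono Set.inter_subset_left)
  have hab : (ν B).toReal ≤ (ν (B ∩ W)).toReal := by
    by_contra hcon
    push_neg at hcon
    have hb1 : (ν B).toReal ≤ 1 := by
      have h2 := prob_le_one (μ := ν) (s := B)
      have := ENNReal.toReal_mono (by simp) h2
      simpa using this
    have ha0 : (0 : ℝ) ≤ (ν (B ∩ W)).toReal := ENNReal.toReal_nonneg
    have hkey := key (((ν B).toReal - (ν (B ∩ W)).toReal) / 2) (by linarith) (by linarith)
    nlinarith
  have heq : (ν (B ∩ W)).toReal = (ν B).toReal := le_antisymm hba hab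
  have hsplit : ν (B ∩ W) + ν (B \ W) = ν B := measure_inter_add_diff B hW
  have htr : (ν (B ∩ W)).toReal + (ν (B \ W)).toReal = (ν B).toReal := by
    rw [← ENNReal.toReal_add hfin1 (measure_ne_top ν _), hsplit]
  have hz : (ν (B \ W)).toReal = 0 := by linarith
  exact ((ENNReal.toReal_eq_zero_iff _).mp hz).resolve_right (measure_ne_top ν _)

end MeasureSection2

end Auxiliary

/-- If `μ` is nonatomic and every pair of distinct points of `E` visits a fixed measurable set
`W ⊆ X × X` with upper density one while the complementary visit times have positive upper
density (so the visit times have no density), then `(μ × μ)(E × E) = 0`, and hence any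
measurable such `E` is null. -/
theorem stmt8 {X : Type*} [MeasurableSpace X] [StandardBorelSpace X]
    (μ : Measure X) [IsProbabilityMeasure μ] [NullSingletonClass μ]
    (T : X → X) (hT : MeasurePreserving T μ μ)
    (W : Set (X × X)) (hW : MeasurableSet W) (E : Set X)
    (hscr : ∀ x ∈ E, ∀ y ∈ E, x ≠ y →
      upperDensity {n : ℕ | (T^[n] x, T^[n] y) ∈ W} = 1 ∧
      0 < upperDensity {n : ℕ | (T^[n] x, T^[n] y) ∉ W}) :
    (μ.prod μ) (E ×ˢ E) = 0 ∧ (MeasurableSet E → μ E = 0) := by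
  set ν : Measure (X × X) := μ.prod μ with hν
  set S : X × X → X × X := Prod.map T T with hSdef
  have hS : MeasurePreserving S ν ν := hT.prod hT
  set B : Set (X × X) := goodB S W with hBdef
  have hBmeas : MeasurableSet B := measurable_goodB hS.measurable hW
  have hBW : ν (B \ W) = 0 := goodB_diff_null hS hW
  set N₀ : Set (X × X) := ⋃ n : ℕ, S^[n] ⁻¹' (B \ W) with hN₀def
  have hN₀ : ν N₀ = 0 := by
    refine measure_iUnion_null fun n => ?_
    rw [(hS.iterate n).measure_preimage (hBmeas.diff hW).nullMeasurableSet]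
    exact hBW
  set N₁ : Set (X × X) := S ⁻¹' N₀ with hN₁def
  have hN₁meas : MeasurableSet N₀ :=
    MeasurableSet.iUnion fun n => (hBmeas.diff hW).preimage ((hS.iterate n).measurable)
  have hN₁ : ν N₁ = 0 := by
    rw [hN₁def, hS.measure_preimage hN₁meas.nullMeasurableSet]
    exact hN₀
  -- the diagonal is null
  letI := upgradeStandardBorel X
  have hΔm : MeasurableSet (Set.diagonal X) := isClosed_diagonal.measurableSet
  have hΔ : ν (Set.diagonal X) = 0 := by
    rw [hν, Measure.prod_apply hΔm]
    have hpre : ∀ x : X, Prod.mk x ⁻¹' Set.diagonal X = {x} := by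
      intro x; ext y; simp [Set.diagonal, eq_comm]
    simp [hpre, measure_singleton]
  -- the key inclusion
  have hincl : E ×ˢ E ⊆ Set.diagonal X ∪ N₁ := by
    rintro ⟨x, y⟩ ⟨hx, hy⟩
    by_cases hxy : x = y
    · exact Or.inl (by simpa [Set.diagonal] using hxy)
    obtain ⟨hd1, hd2⟩ := hscr x hx y hy hxy
    set p : X × X := (x, y) with hp
    have horb : ∀ n : ℕ, S^[n] p = (T^[n] x, T^[n] y) := by
      intro n; rw [hSdef, Prod.map_iterate]; rfl
    set q : X × X := S p with hq
    -- cardinality identity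
    have hcard : ∀ N : ℕ,
        ((((Finset.Icc 1 N).filter (fun n => (T^[n] x, T^[n] y) ∈ W)).card : ℝ))
        = birkhoffSum S (W.indicator (1 : (X × X) → ℝ)) N q := by
      intro N
      rw [birkhoffSum, Finset.card_filter]
      push_cast
      rw [← Finset.Ico_add_one_right_eq_Icc, Finset.sum_Ico_eq_sum_range]
      refine Finset.sum_congr rfl ?_
      intro i _
      have : S^[i] q = (T^[1 + i] x, T^[1 + i] y) := by
        rw [hq, ← Function.iterate_succ_apply, horb (i + 1), Nat.add_comm 1 i]
      rw [this, Set.indicator_apply]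
      by_cases hmem : (T^[1 + i] x, T^[1 + i] y) ∈ W <;> simp [hmem]
    -- q belongs to B
    have hqB : q ∈ B := by
      intro k
      have hck : (1 - ((k : ℝ) + 1)⁻¹) < 1 := by
        have : (0 : ℝ) < ((k : ℝ) + 1)⁻¹ := by positivity
        linarith
      have hsetcard : ∀ N : ℕ, ((Finset.Icc 1 N).filter
            (fun n => n ∈ {n : ℕ | (T^[n] x, T^[n] y) ∈ W}))
          = ((Finset.Icc 1 N).filter (fun n => (T^[n] x, T^[n] y) ∈ W)) :=
        fun N => Finset.filter_congr (fun n _ => by simp)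
      have hfreq : ∃ᶠ N in atTop, (1 - ((k : ℝ) + 1)⁻¹) <
          (((Finset.Icc 1 N).filter
            (fun n => n ∈ {n : ℕ | (T^[n] x, T^[n] y) ∈ W})).card : ℝ) / N := by
        refine frequently_lt_of_lt_limsup ?_
          (by rw [← upperDensity_eq_limsup, hd1]; exact hck)
        exact (Filter.isBoundedUnder_of ⟨0, fun N => by positivity⟩).isCoboundedUnder_le
      have hfreq2 : ∃ᶠ N in atTop, (1 - ((k : ℝ) + 1)⁻¹) <
          (((Finset.Icc 1 N).filter (fun n => (T^[n] x, T^[n] y) ∈ W)).card : ℝ) / N := by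
        refine hfreq.mono ?_
        intro N hN
        rwa [hsetcard N] at hN
      refine hfreq2.mono ?_
      intro N hN
      have hc0 : (0 : ℝ) ≤ 1 - ((k : ℝ) + 1)⁻¹ := by
        have h1 : ((k : ℝ) + 1)⁻¹ ≤ 1 := by
          rw [inv_le_one_iff₀]
          right; exact le_add_of_nonneg_left (Nat.cast_nonneg k)
        linarith
      have hNpos : 0 < N := by
        by_contra hN0
        push_neg at hN0
        interval_cases N
        simp at hN
        linarith
      rw [lt_div_iff₀ (by exact_mod_cast hNpos)] at hN
      calc (1 - ((k : ℝ) + 1)⁻¹) * N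
          < (((Finset.Icc 1 N).filter (fun n => (T^[n] x, T^[n] y) ∈ W)).card : ℝ) := hN
        _ = birkhoffSum S (W.indicator 1) N q := hcard N
    -- some iterate of q escapes W
    have hesc : ∃ n : ℕ, S^[n] q ∉ W := by
      by_contra hall
      push_neg at hall
      have hud0 : upperDensity {n : ℕ | (T^[n] x, T^[n] y) ∉ W} = 0 := by
        refine upperDensity_eq_zero ?_
        intro n h1 hns
        obtain ⟨m, rfl⟩ : ∃ m, n = m + 1 := ⟨n - 1, by omega⟩
        have h3 := hall m
        rw [hq, ← Function.iterate_succ_apply, horb (m + 1)] at h3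
        exact hns h3
      rw [hud0] at hd2
      exact lt_irrefl 0 hd2
    obtain ⟨n, hn⟩ := hesc
    refine Or.inr ?_
    rw [hN₁def, Set.mem_preimage, hN₀def, Set.mem_iUnion]
    exact ⟨n, Set.mem_preimage.mpr ⟨goodB_iterate hqB n, hn⟩⟩
  have hnull : ν (E ×ˢ E) = 0 :=
    measure_mono_null hincl (measure_union_null hΔ hN₁)
  refine ⟨hnull, fun hE => ?_⟩
  rw [hν, Measure.prod_prod] at hnull
  exact mul_self_eq_zero.mp hnull
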